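/- For every ε > 0 there exists a constant c > 0 such that for infinitely many k there is a finite undirected graph G with positive edge lengths and a set T of k terminals with the following property: every minor H of G (no terminal deleted, no two terminals contracted together) whose terminal shortest-path distances satisfy d_G(t,t') ≤ d_H(t,t') ≤ (2−ε)·d_G(t,t') for all t,t' ∈ T must contain at least c·k² non-terminal vertices. -/

import Mathlib

/-- A finite undirected graph with real edge lengths and a designated terminal set. -/
structure TermGraph where
  V : Type
  fintypeV : Fintype V
  decEqV : DecidableEq V
  G : SimpleGraph V
  len : V → V → ℝ
  T : Finset V

attribute [instance] TermGraph.fintypeV TermGraph.decEqV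

/-- The length of a walk: the sum of the lengths of its edges. -/
def walkLen {V : Type} (len : V → V → ℝ) {G : SimpleGraph V} {u v : V}
    (p : G.Walk u v) : ℝ :=
  (p.darts.map fun d => len d.toProd.1 d.toProd.2).sum

/-- Shortest-path distance in a graph with edge lengths `len`. -/
noncomputable def gdist {V : Type} (G : SimpleGraph V) (len : V → V → ℝ) (u v : V) : ℝ :=
  sInf {r : ℝ | ∃ p : G.Walk u v, walkLen len p = r}

namespace TermGraph

/-- Shortest-path distance between two vertices of a `TermGraph`. -/
noncomputable def dist (X : TermGraph) (u v : X.V) : ℝ :=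
  gdist X.G X.len u v

/-- The edge lengths are symmetric and positive on edges. -/
def goodLen (X : TermGraph) : Prop :=
  (∀ u v : X.V, X.len u v = X.len v u) ∧
  (∀ u v : X.V, X.G.Adj u v → 0 < X.len u v)

end TermGraph

/-- A terminal-preserving minor of `X`: a weighted graph `Y` together with a partial
partition of `V(X)` into nonempty, pairwise disjoint, connected branch sets indexed
by the vertices of `Y`.  Edges of `Y` may appear only between branch sets joined by an
edge of `X`; each terminal of `X` lies in exactly one branch set (`node` sends it to
that super-node), no two terminals lie in the same branch set, and the terminals of `Y`
are exactly the super-nodes of the terminals of `X`.  `Y` carries its own edge lengths. -/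
structure MinorOf (X : TermGraph) where
  Y : TermGraph
  branch : Y.V → Finset X.V
  branch_nonempty : ∀ w, (branch w).Nonempty
  branch_connected : ∀ w, (X.G.induce ((branch w : Set X.V))).Connected
  branch_disjoint : ∀ w w', w ≠ w' → Disjoint (branch w) (branch w')
  adj_mapsDown : ∀ w w', Y.G.Adj w w' →
    ∃ u ∈ branch w, ∃ v ∈ branch w', X.G.Adj u v
  node : X.V → Y.V
  node_mem : ∀ t ∈ X.T, t ∈ branch (node t)
  node_inj : ∀ t ∈ X.T, ∀ t' ∈ X.T, node t = node t' → t = t'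
  node_terminal : ∀ t ∈ X.T, node t ∈ Y.T
  terminal_node : ∀ w ∈ Y.T, ∃ t ∈ X.T, node t = w

namespace MinorOf

variable {X : TermGraph}

/-- The number of non-terminal vertices of the minor. -/
def nonTerms (M : MinorOf X) : ℕ := (Finset.univ \ M.Y.T).card

/-- All terminal distances in the minor dominate the corresponding distances in `X`. -/
def Dominates (M : MinorOf X) : Prop :=
  ∀ t ∈ X.T, ∀ t' ∈ X.T, X.dist t t' ≤ M.Y.dist (M.node t) (M.node t')

/-- `M` is an `α`-distance approximating minor of `X`:
`d_X(t,t') ≤ d_M(t,t') ≤ α·d_X(t,t')` for all terminals `t, t'`. -/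
def IsDAM (M : MinorOf X) (α : ℝ) : Prop :=
  ∀ t ∈ X.T, ∀ t' ∈ X.T,
    X.dist t t' ≤ M.Y.dist (M.node t) (M.node t') ∧
    M.Y.dist (M.node t) (M.node t') ≤ α * X.dist t t'

end MinorOf

/-! ### Generic walk-length lemmas -/

section WalkLen

variable {V : Type} {G : SimpleGraph V} {len : V → V → ℝ}

@[simp] lemma walkLen_nil {u : V} : walkLen len (SimpleGraph.Walk.nil : G.Walk u u) = 0 := rfl

@[simp] lemma walkLen_cons {u v w : V} (h : G.Adj u v) (p : G.Walk v w) :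
    walkLen len (SimpleGraph.Walk.cons h p) = len u v + walkLen len p := by
  simp [walkLen]

lemma walkLen_append {u v w : V} (p : G.Walk u v) (q : G.Walk v w) :
    walkLen len (p.append q) = walkLen len p + walkLen len q := by
  simp [walkLen, SimpleGraph.Walk.darts_append]

/-- If a positive constant is below the `gdist`, it is below the length of every walk. -/
lemma le_walkLen_of_le_gdist {c : ℝ} (hc : 0 < c) {A B : V}
    (h : c ≤ gdist G len A B) (p : G.Walk A B) : c ≤ walkLen len p := by
  by_cases hbdd : BddBelow {r : ℝ | ∃ q : G.Walk A B, walkLen len q = r}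
  · exact le_trans h (csInf_le hbdd ⟨p, rfl⟩)
  · rw [gdist, Real.sInf_of_not_bddBelow hbdd] at h
    linarith

/-- Pumping a negative loop: the walk-length set is unbounded below. -/
lemma not_bddBelow_of_neg_loop {A B : V} (γ : G.Walk A A)
    (hγ : walkLen len γ < 0) (δ : G.Walk A B) :
    ¬ BddBelow {r : ℝ | ∃ p : G.Walk A B, walkLen len p = r} := by
  rintro ⟨L, hL⟩
  -- powers of γ
  have key : ∀ n : ℕ, ∃ q : G.Walk A A, walkLen len q = n * walkLen len γ := by
    intro n
    induction n with
    | zero => exact ⟨.nil, by simp⟩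
    | succ k ih =>
      obtain ⟨q, hq⟩ := ih
      exact ⟨q.append γ, by rw [walkLen_append, hq]; push_cast; ring⟩
  obtain ⟨n, hn⟩ := exists_nat_gt ((walkLen len δ - L) / (-walkLen len γ))
  obtain ⟨q, hq⟩ := key n
  have hmem : walkLen len (q.append δ) ∈ {r : ℝ | ∃ p : G.Walk A B, walkLen len p = r} :=
    ⟨q.append δ, rfl⟩
  have hlb := hL hmem
  rw [walkLen_append, hq] at hlb
  have h1 : (walkLen len δ - L) < n * (-walkLen len γ) := by
    rw [div_lt_iff₀ (by linarith)] at hn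
    linarith
  linarith

end WalkLen

/-! ### The construction: a Latin-square partial Steiner triple system graph -/

section Construction

variable (m : ℕ) [NeZero m]

/-- Terminals: three groups indexed by `ZMod m`. -/
abbrev Ter := ZMod m × Fin 3
/-- Non-terminal witnesses. -/
abbrev Hb := ZMod m × ZMod m
/-- Vertices. -/
abbrev Vm := Ter m ⊕ Hb m

/-- Witness `z = (x, y)` covers the terminals `(x,0)`, `(y,1)`, `(x+y,2)`. -/
def covers (z : Hb m) (t : Ter m) : Prop :=
  t = (z.1, 0) ∨ t = (z.2, 1) ∨ t = (z.1 + z.2, 2)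

/-- The graph: each witness is joined to the three terminals it covers. -/
def Gm : SimpleGraph (Vm m) where
  Adj u v :=
    match u, v with
    | .inl t, .inr z => covers m z t
    | .inr z, .inl t => covers m z t
    | _, _ => False
  symm := by
    constructor
    intro u v h
    cases u <;> cases v <;> simp_all
  loopless := by
    constructor
    intro u h
    cases u <;> exact h

@[simp] lemma Gm_adj_inl_inr {t : Ter m} {z : Hb m} :
    (Gm m).Adj (.inl t) (.inr z) ↔ covers m z t := Iff.rfl

@[simp] lemma Gm_adj_inr_inl {t : Ter m} {z : Hb m} :
    (Gm m).Adj (.inr z) (.inl t) ↔ covers m z t := Iff.rfl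

@[simp] lemma Gm_not_adj_inl_inl {t t' : Ter m} :
    ¬ (Gm m).Adj (.inl t) (.inl t') := fun h => h

@[simp] lemma Gm_not_adj_inr_inr {z z' : Hb m} :
    ¬ (Gm m).Adj (.inr z) (.inr z') := fun h => h

/-- The terminal graph. -/
noncomputable def Xm : TermGraph where
  V := Vm m
  fintypeV := inferInstance
  decEqV := inferInstance
  G := Gm m
  len := fun _ _ => (1 : ℝ) / 2
  T := Finset.univ.map ⟨Sum.inl, Sum.inl_injective⟩

lemma mem_T_inl (t : Ter m) : (Sum.inl t : Vm m) ∈ (Xm m).T := by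
  simp [Xm]
  exact Finset.mem_map_of_mem _ (Finset.mem_univ t)

lemma mem_T_iff {v : Vm m} : v ∈ (Xm m).T ↔ ∃ t : Ter m, v = Sum.inl t := by
  constructor
  · intro h
    obtain ⟨t, _, rfl⟩ := Finset.mem_map.mp h
    exact ⟨t, rfl⟩
  · rintro ⟨t, rfl⟩; exact mem_T_inl m t

lemma card_T : (Xm m).T.card = 3 * m := by
  simp only [Xm, Finset.card_map, Finset.card_univ, Fintype.card_prod, ZMod.card,
    Fintype.card_fin]
  ring

lemma Xm_goodLen : (Xm m).goodLen :=
  ⟨fun _ _ => rfl, fun u v _ => by show (0:ℝ) < 1/2; norm_num⟩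

/-- All `Xm`-walk lengths are `length/2`. -/
lemma Xm_walkLen {u v : Vm m} (p : (Gm m).Walk u v) :
    walkLen (Xm m).len p = p.length * (1 / 2 : ℝ) := by
  induction p with
  | nil => show (0:ℝ) = _; simp
  | cons h q ih =>
    show walkLen (Xm m).len (.cons h q) = _
    rw [show walkLen (Xm m).len (.cons h q) = (1:ℝ)/2 + walkLen (Xm m).len q from rfl, ih]
    show (1:ℝ)/2 + _ = _
    rw [SimpleGraph.Walk.length_cons]
    push_cast
    ring

lemma Xm_walkLen_nonneg {u v : Vm m} (p : (Gm m).Walk u v) :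
    0 ≤ walkLen (Xm m).len p := by
  rw [Xm_walkLen]
  positivity

/-- Parity: walks in the bipartite graph `Gm` alternate sides. -/
lemma Xm_walk_mod2 {u v : Vm m} (p : (Gm m).Walk u v) :
    p.length % 2 = (if u.isLeft = v.isLeft then 0 else 1) := by
  induction p with
  | nil => simp
  | @cons a b c h q ih =>
    have hab : a.isLeft ≠ b.isLeft := by
      cases a <;> cases b <;> simp_all
    rw [SimpleGraph.Walk.length_cons]
    by_cases hac : a.isLeft = c.isLeft
    · have hbc : b.isLeft ≠ c.isLeft := fun hb => hab (hac.trans hb.symm)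
      rw [if_pos hac]
      rw [if_neg hbc] at ih
      omega
    · have hbc : b.isLeft = c.isLeft := by
        cases hA : a.isLeft <;> cases hB : b.isLeft <;> cases hC : c.isLeft <;> simp_all
      rw [if_neg hac]
      rw [if_pos hbc] at ih
      omega

/-- Any walk between distinct terminals has at least two edges, hence length `≥ 1`. -/
lemma Xm_terminal_walk_ge {t t' : Ter m} (hne : t ≠ t')
    (p : (Gm m).Walk (.inl t) (.inl t')) : 1 ≤ walkLen (Xm m).len p := by
  have h2 : p.length % 2 = 0 := by
    have := Xm_walk_mod2 m p
    simpa using this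
  have hne0 : p.length ≠ 0 := by
    intro h0
    have := SimpleGraph.Walk.eq_of_length_eq_zero h0
    exact hne (by injection this)
  have : 2 ≤ p.length := by omega
  rw [Xm_walkLen]
  have : (2 : ℝ) ≤ (p.length : ℝ) := by exact_mod_cast this
  linarith

end Construction

/-! ### Distance facts in `Xm` -/

section Dist

variable (m : ℕ) [NeZero m]

lemma exists_walk_to_zero (t : Ter m) :
    Nonempty ((Gm m).Walk (.inl t) (.inl ((0 : ZMod m), (0 : Fin 3)))) := by
  obtain ⟨a, i⟩ := t
  fin_cases i
  · -- group 0 : (a,0) → z(a,0) → (0,1) → z(0,0) → (0,0)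
    have h1 : (Gm m).Adj (.inl (a, (0:Fin 3))) (.inr ((a, 0) : Hb m)) :=
      (Gm_adj_inl_inr m).mpr (Or.inl rfl)
    have h2 : (Gm m).Adj (.inr ((a, 0) : Hb m)) (.inl ((0:ZMod m), (1:Fin 3))) :=
      (Gm_adj_inr_inl m).mpr (Or.inr (Or.inl rfl))
    have h3 : (Gm m).Adj (.inl ((0:ZMod m), (1:Fin 3))) (.inr (((0:ZMod m), 0) : Hb m)) :=
      (Gm_adj_inl_inr m).mpr (Or.inr (Or.inl rfl))
    have h4 : (Gm m).Adj (.inr (((0:ZMod m), 0) : Hb m)) (.inl ((0:ZMod m), (0:Fin 3))) :=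
      (Gm_adj_inr_inl m).mpr (Or.inl rfl)
    exact ⟨.cons h1 (.cons h2 (.cons h3 (.cons h4 .nil)))⟩
  · -- group 1 : (a,1) → z(0,a) → (0,0)
    have h1 : (Gm m).Adj (.inl (a, (1:Fin 3))) (.inr (((0:ZMod m), a) : Hb m)) :=
      (Gm_adj_inl_inr m).mpr (Or.inr (Or.inl rfl))
    have h2 : (Gm m).Adj (.inr (((0:ZMod m), a) : Hb m)) (.inl ((0:ZMod m), (0:Fin 3))) :=
      (Gm_adj_inr_inl m).mpr (Or.inl rfl)
    exact ⟨.cons h1 (.cons h2 .nil)⟩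
  · -- group 2 : (a,2) → z(0,a) → (0,0)
    have h1 : (Gm m).Adj (.inl (a, (2:Fin 3))) (.inr (((0:ZMod m), a) : Hb m)) := by
      refine (Gm_adj_inl_inr m).mpr (Or.inr (Or.inr ?_))
      simp
    have h2 : (Gm m).Adj (.inr (((0:ZMod m), a) : Hb m)) (.inl ((0:ZMod m), (0:Fin 3))) :=
      (Gm_adj_inr_inl m).mpr (Or.inl rfl)
    exact ⟨.cons h1 (.cons h2 .nil)⟩

lemma exists_walk_terminals (t t' : Ter m) :
    Nonempty ((Gm m).Walk (.inl t) (.inl t')) := by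
  obtain ⟨p⟩ := exists_walk_to_zero m t
  obtain ⟨q⟩ := exists_walk_to_zero m t'
  exact ⟨p.append q.reverse⟩

lemma Xdist_ge_one {t t' : Ter m} (hne : t ≠ t') :
    1 ≤ (Xm m).dist (.inl t) (.inl t') := by
  show 1 ≤ sInf {r : ℝ | ∃ p : (Gm m).Walk (.inl t) (.inl t'), walkLen (Xm m).len p = r}
  obtain ⟨p₀⟩ := exists_walk_terminals m t t'
  refine le_csInf ⟨_, p₀, rfl⟩ ?_
  rintro r ⟨p, rfl⟩
  exact Xm_terminal_walk_ge m hne p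

lemma Xdist_le_one {t t' : Ter m} {z : Hb m} (h1 : covers m z t) (h2 : covers m z t') :
    (Xm m).dist (.inl t) (.inl t') ≤ 1 := by
  show sInf {r : ℝ | ∃ p : (Gm m).Walk (.inl t) (.inl t'), walkLen (Xm m).len p = r} ≤ 1
  have hbdd : BddBelow {r : ℝ | ∃ p : (Gm m).Walk (.inl t) (.inl t'), walkLen (Xm m).len p = r} := by
    refine ⟨0, ?_⟩
    rintro r ⟨p, rfl⟩
    exact Xm_walkLen_nonneg m p
  have hadj1 : (Gm m).Adj (.inl t) (.inr z) := (Gm_adj_inl_inr m).mpr h1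
  have hadj2 : (Gm m).Adj (.inr z) (.inl t') := (Gm_adj_inr_inl m).mpr h2
  refine csInf_le hbdd ⟨.cons hadj1 (.cons hadj2 .nil), ?_⟩
  show (1:ℝ)/2 + ((1:ℝ)/2 + 0) = 1
  norm_num

end Dist

/-! ### Structure of minors of `Xm` -/

section MinorStructure

variable {m : ℕ} [NeZero m] (M : MinorOf (Xm m))

/-- A terminal determines the node whose branch contains it. -/
lemma branch_unique {v : Vm m} {w : M.Y.V} (hvT : v ∈ (Xm m).T)
    (hv : v ∈ M.branch w) : w = M.node v := by
  by_contra hne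
  exact (Finset.disjoint_left.mp (M.branch_disjoint _ _ hne) hv) (M.node_mem v hvT)

/-- A first step of a walk exists when the endpoints differ. -/
lemma exists_first_step {α : Type*} {G : SimpleGraph α} {a b : α} (hne : a ≠ b)
    (q : G.Walk a b) : ∃ c, G.Adj a c := by
  cases q with
  | nil => exact absurd rfl hne
  | cons h _ => exact ⟨_, h⟩

/-- A walk in an induced subgraph whose start differs from its end yields a first
step inside the set. -/
lemma exists_first_step_induce {s : Set (Vm m)} {a b : Vm m}
    (ha : a ∈ s) (hb : b ∈ s) (hne : a ≠ b)
    (q : ((Xm m).G.induce s).Walk ⟨a, ha⟩ ⟨b, hb⟩) :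
    ∃ c ∈ s, (Gm m).Adj a c := by
  obtain ⟨⟨c, hc⟩, hadj⟩ := exists_first_step (by simpa using hne) q
  exact ⟨c, hc, hadj⟩

/-- Every non-terminal node of a minor of `Xm` has a singleton branch `{z}`. -/
lemma hub_branch {w : M.Y.V} (hw : w ∉ M.Y.T) :
    ∃ z : Hb m, M.branch w = {Sum.inr z} := by
  have hnoinl : ∀ τ : Ter m, Sum.inl τ ∈ M.branch w → False := by
    intro τ h
    have hwn : w = M.node (.inl τ) := branch_unique M (mem_T_inl m τ) h
    exact hw (hwn ▸ M.node_terminal _ (mem_T_inl m τ))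
  obtain ⟨u, hu⟩ := M.branch_nonempty w
  cases u with
  | inl τ => exact absurd hu (fun h => hnoinl τ h)
  | inr z =>
    refine ⟨z, Finset.eq_singleton_iff_unique_mem.mpr ⟨hu, ?_⟩⟩
    intro v hv
    cases v with
    | inl τ' => exact absurd hv (fun h => hnoinl τ' h)
    | inr z' =>
      by_contra hne
      have hreach := (M.branch_connected w).preconnected ⟨Sum.inr z', hv⟩ ⟨Sum.inr z, hu⟩
      obtain ⟨q⟩ := hreach
      obtain ⟨c, hcB, hadj⟩ := exists_first_step_induce hv hu hne q
      cases c with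
      | inl τ'' => exact hnoinl τ'' hcB
      | inr z'' => exact (Gm_not_adj_inr_inr m) hadj

end MinorStructure

section MinorStructure2

variable {m : ℕ} [NeZero m] (M : MinorOf (Xm m))

/-- The only terminal inside the branch of `node (inl σ)` is `σ` itself. -/
lemma term_branch_mem {σ τ : Ter m}
    (h : Sum.inl τ ∈ M.branch (M.node (.inl σ))) : τ = σ := by
  have h1 : M.node (.inl σ) = M.node (.inl τ) := branch_unique M (mem_T_inl m τ) h
  have h2 := M.node_inj _ (mem_T_inl m σ) _ (mem_T_inl m τ) h1
  injection h2 with h3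
  exact h3.symm

/-- A witness lying in the branch of `node (inl σ)` covers `σ`. -/
lemma branch_node_adj {σ : Ter m} {z' : Hb m}
    (h : Sum.inr z' ∈ M.branch (M.node (.inl σ))) : covers m z' σ := by
  have hσ : Sum.inl σ ∈ M.branch (M.node (.inl σ)) := M.node_mem _ (mem_T_inl m σ)
  have hne : (Sum.inr z' : Vm m) ≠ Sum.inl σ := by simp
  have hreach := (M.branch_connected (M.node (.inl σ))).preconnected
    ⟨Sum.inr z', h⟩ ⟨Sum.inl σ, hσ⟩
  obtain ⟨q⟩ := hreach
  obtain ⟨c, hcB, hadj⟩ := exists_first_step_induce h hσ hne q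
  cases c with
  | inl τ =>
    have := term_branch_mem M hcB
    subst this
    exact (Gm_adj_inr_inl m).mp hadj
  | inr z'' => exact absurd hadj (Gm_not_adj_inr_inr m)

/-- An edge of the minor leaving a hub `{z}` goes to a node of a terminal covered by `z`. -/
lemma adj_hub_other {w₁ w₂ : M.Y.V} {z : Hb m} (h : M.Y.G.Adj w₁ w₂)
    (hz : M.branch w₁ = {Sum.inr z}) :
    ∃ τ : Ter m, w₂ = M.node (.inl τ) ∧ covers m z τ := by
  obtain ⟨u, hu, v, hv, huv⟩ := M.adj_mapsDown _ _ h
  rw [hz] at hu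
  replace hu := Finset.mem_singleton.mp hu
  subst hu
  cases v with
  | inl τ =>
    exact ⟨τ, branch_unique M (mem_T_inl m τ) hv, (Gm_adj_inr_inl m).mp huv⟩
  | inr z'' => exact absurd huv (Gm_not_adj_inr_inr m)

/-- An edge of the minor from `node (inl σ)` into a hub `{z}` forces `z` to cover `σ`. -/
lemma adj_term_hub {σ : Ter m} {w₁ : M.Y.V} {z : Hb m}
    (h : M.Y.G.Adj (M.node (.inl σ)) w₁) (hz : M.branch w₁ = {Sum.inr z}) :
    covers m z σ := by
  obtain ⟨u, hu, v, hv, huv⟩ := M.adj_mapsDown _ _ h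
  rw [hz] at hv
  replace hv := Finset.mem_singleton.mp hv
  subst hv
  cases u with
  | inl τ =>
    have := term_branch_mem M hu
    subst this
    exact (Gm_adj_inl_inr m).mp huv
  | inr z'' => exact absurd huv (Gm_not_adj_inr_inr m)

end MinorStructure2

/-! ### The key lemma: a mishandled witness kills its dead pair -/

section DeadPair

variable {m : ℕ} [NeZero m]

lemma deadpair (M : MinorOf (Xm m)) {ε : ℝ} (hε : 0 < ε)
    (hM : M.IsDAM (2 - ε)) (s₁ s₂ : Ter m) (z₀ : Hb m)
    (h12 : s₁ ≠ s₂)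
    (ha1 : covers m z₀ s₁) (ha2 : covers m z₀ s₂)
    (huniq : ∀ z' : Hb m, covers m z' s₁ → covers m z' s₂ → z' = z₀)
    (hF1 : ∀ w, M.branch w ≠ {Sum.inr z₀})
    (hF2a : Sum.inr z₀ ∉ M.branch (M.node (.inl s₁)))
    (hF2b : Sum.inr z₀ ∉ M.branch (M.node (.inl s₂))) : False := by
  have hT1 : (Sum.inl s₁ : Vm m) ∈ (Xm m).T := mem_T_inl m s₁
  have hT2 : (Sum.inl s₂ : Vm m) ∈ (Xm m).T := mem_T_inl m s₂
  have hWW' : M.node (.inl s₁) ≠ M.node (.inl s₂) := by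
    intro h
    have := M.node_inj _ hT1 _ hT2 h
    exact h12 (by injection this)
  have hX1 : (Xm m).dist (.inl s₁) (.inl s₂) = 1 :=
    le_antisymm (Xdist_le_one m ha1 ha2) (Xdist_ge_one m h12)
  obtain ⟨hDlo, hDhi⟩ := hM _ hT1 _ hT2
  rw [hX1] at hDlo hDhi
  rw [mul_one] at hDhi
  have hdistWW' : M.Y.dist (M.node (.inl s₁)) (M.node (.inl s₂)) =
      sInf {r : ℝ | ∃ p : M.Y.G.Walk (M.node (.inl s₁)) (M.node (.inl s₂)),
        walkLen M.Y.len p = r} := rfl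
  have hSne : {r : ℝ | ∃ p : M.Y.G.Walk (M.node (.inl s₁)) (M.node (.inl s₂)),
      walkLen M.Y.len p = r}.Nonempty := by
    by_contra h
    rw [Set.not_nonempty_iff_eq_empty] at h
    rw [hdistWW', h, Real.sInf_empty] at hDlo
    linarith
  have hSbdd : BddBelow {r : ℝ | ∃ p : M.Y.G.Walk (M.node (.inl s₁)) (M.node (.inl s₂)),
      walkLen M.Y.len p = r} := by
    by_contra h
    rw [hdistWW', Real.sInf_of_not_bddBelow h] at hDlo
    linarith
  have hW'T : M.node (.inl s₂) ∈ M.Y.T := M.node_terminal _ hT2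
  -- There is no edge between the two terminal nodes.
  have noedge : ¬ M.Y.G.Adj (M.node (.inl s₁)) (M.node (.inl s₂)) := by
    intro h
    obtain ⟨u, hu, v, hv, huv⟩ := M.adj_mapsDown _ _ h
    cases u with
    | inl τ =>
      have hτ : τ = s₁ := term_branch_mem M hu
      rw [hτ] at huv
      cases v with
      | inl τ' => exact (Gm_not_adj_inl_inl m) huv
      | inr z' =>
        have hc1 : covers m z' s₁ := (Gm_adj_inl_inr m).mp huv
        have hc2 : covers m z' s₂ := branch_node_adj M hv
        exact hF2b (huniq z' hc1 hc2 ▸ hv)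
    | inr z' =>
      cases v with
      | inl τ' =>
        have hτ : τ' = s₂ := term_branch_mem M hv
        rw [hτ] at huv
        have hc2 : covers m z' s₂ := (Gm_adj_inr_inl m).mp huv
        have hc1 : covers m z' s₁ := branch_node_adj M hu
        exact hF2a (huniq z' hc1 hc2 ▸ hu)
      | inr z'' => exact (Gm_not_adj_inr_inr m) huv
  -- Every walk between the two terminal nodes has length at least 2.
  have main : ∀ n (A : M.Y.V), A = M.node (.inl s₁) →
      ∀ p : M.Y.G.Walk A (M.node (.inl s₂)),
      p.length ≤ n → 2 ≤ walkLen M.Y.len p := by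
    intro n
    induction n with
    | zero =>
      intro A hA p hp
      cases p with
      | nil => exact absurd hA.symm hWW'
      | cons h q => simp [SimpleGraph.Walk.length_cons] at hp
    | succ n ih =>
      intro A hA p hp
      cases p with
      | nil => exact absurd hA.symm hWW'
      | @cons _ w₁ _ h q =>
        subst hA
        by_cases hw₁T : w₁ ∈ M.Y.T
        · -- first step hits a terminal node
          obtain ⟨t, htT, hteq⟩ := M.terminal_node w₁ hw₁T
          obtain ⟨σ, rfl⟩ := (mem_T_iff m).mp htT
          have hσ1 : σ ≠ s₁ := by
            intro hEq
            subst hEq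
            exact h.ne hteq
          have hσ2 : σ ≠ s₂ := by
            intro hEq
            subst hEq
            rw [← hteq] at h
            exact noedge h
          have hp1 : (1:ℝ) ≤ walkLen M.Y.len (SimpleGraph.Walk.cons h .nil) := by
            apply le_walkLen_of_le_gdist one_pos
            calc (1:ℝ) ≤ (Xm m).dist (.inl s₁) (.inl σ) := Xdist_ge_one m (Ne.symm hσ1)
              _ ≤ M.Y.dist (M.node (.inl s₁)) (M.node (.inl σ)) :=
                  (hM _ hT1 _ (mem_T_inl m σ)).1
              _ = gdist M.Y.G M.Y.len (M.node (.inl s₁)) w₁ := by rw [hteq]; rfl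
          have hp2 : (1:ℝ) ≤ walkLen M.Y.len q := by
            apply le_walkLen_of_le_gdist one_pos
            calc (1:ℝ) ≤ (Xm m).dist (.inl σ) (.inl s₂) := Xdist_ge_one m hσ2
              _ ≤ M.Y.dist (M.node (.inl σ)) (M.node (.inl s₂)) :=
                  (hM _ (mem_T_inl m σ) _ hT2).1
              _ = gdist M.Y.G M.Y.len w₁ (M.node (.inl s₂)) := by rw [hteq]; rfl
          rw [walkLen_cons]
          rw [walkLen_cons, walkLen_nil] at hp1
          linarith
        · -- first step hits a hub
          obtain ⟨z, hz⟩ := hub_branch M hw₁T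
          have hcov1 : covers m z s₁ := adj_term_hub M h hz
          cases q with
          | nil => exact absurd hW'T hw₁T
          | @cons _ w₂ _ h' q' =>
            obtain ⟨τ, hw₂eq, hcovτ⟩ := adj_hub_other M h' hz
            by_cases hw₂W : w₂ = M.node (.inl s₁)
            · -- a loop back to the start
              subst hw₂W
              have hγ : 0 ≤ walkLen M.Y.len
                  (SimpleGraph.Walk.cons h (SimpleGraph.Walk.cons h' .nil)) := by
                by_contra hneg
                push_neg at hneg
                exact (not_bddBelow_of_neg_loop _ hneg q') hSbdd
              have hq' : 2 ≤ walkLen M.Y.len q' := by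
                apply ih _ rfl q'
                simp only [SimpleGraph.Walk.length_cons] at hp
                omega
              rw [walkLen_cons, walkLen_cons]
              rw [walkLen_cons, walkLen_cons, walkLen_nil] at hγ
              linarith
            · by_cases hw₂W' : w₂ = M.node (.inl s₂)
              · -- the walk is  s₁-node → hub → s₂-node : the hub must be z₀
                subst hw₂W'
                have hτ2 : τ = s₂ :=
                  Sum.inl_injective (M.node_inj _ (mem_T_inl m τ) _ hT2 hw₂eq.symm)
                subst hτ2
                have hzz : z = z₀ := huniq z hcov1 hcovτ
                subst hzz
                exact absurd hz (hF1 w₁)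
              · -- the walk passes through a third terminal node
                have hτ1 : τ ≠ s₁ := by
                  intro hEq
                  subst hEq
                  exact hw₂W hw₂eq
                have hτ2 : τ ≠ s₂ := by
                  intro hEq
                  subst hEq
                  exact hw₂W' hw₂eq
                have hp1 : (1:ℝ) ≤ walkLen M.Y.len
                    (SimpleGraph.Walk.cons h (SimpleGraph.Walk.cons h' .nil)) := by
                  apply le_walkLen_of_le_gdist one_pos
                  calc (1:ℝ) ≤ (Xm m).dist (.inl s₁) (.inl τ) := Xdist_ge_one m (Ne.symm hτ1)
                    _ ≤ M.Y.dist (M.node (.inl s₁)) (M.node (.inl τ)) :=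
                        (hM _ hT1 _ (mem_T_inl m τ)).1
                    _ = gdist M.Y.G M.Y.len (M.node (.inl s₁)) w₂ := by rw [hw₂eq]; rfl
                have hp2 : (1:ℝ) ≤ walkLen M.Y.len q' := by
                  apply le_walkLen_of_le_gdist one_pos
                  calc (1:ℝ) ≤ (Xm m).dist (.inl τ) (.inl s₂) := Xdist_ge_one m hτ2
                    _ ≤ M.Y.dist (M.node (.inl τ)) (M.node (.inl s₂)) :=
                        (hM _ (mem_T_inl m τ) _ hT2).1
                    _ = gdist M.Y.G M.Y.len w₂ (M.node (.inl s₂)) := by rw [hw₂eq]; rfl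
                rw [walkLen_cons, walkLen_cons]
                rw [walkLen_cons, walkLen_cons, walkLen_nil] at hp1
                linarith
  -- Conclude: some walk is shorter than 2, contradiction.
  have hlt : sInf {r : ℝ | ∃ p : M.Y.G.Walk (M.node (.inl s₁)) (M.node (.inl s₂)),
      walkLen M.Y.len p = r} < 2 := by
    rw [← hdistWW']
    linarith
  obtain ⟨r, hmem, hr⟩ := exists_lt_of_csInf_lt hSne hlt
  obtain ⟨p, rfl⟩ := hmem
  have := main p.length _ rfl p le_rfl
  linarith

end DeadPair

/-! ### Every witness must survive as a non-terminal node -/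

section Forced

variable {m : ℕ} [NeZero m]

lemma fin3_01 : (0 : Fin 3) ≠ 1 := by decide
lemma fin3_02 : (0 : Fin 3) ≠ 2 := by decide
lemma fin3_12 : (1 : Fin 3) ≠ 2 := by decide

lemma ter_ne_of_snd {a b : ZMod m} {i j : Fin 3} (hij : i ≠ j) :
    ((a, i) : Ter m) ≠ (b, j) := fun h => hij (congrArg Prod.snd h)

/-- Unpack a `covers` fact at group 0. -/
lemma covers_group0 {z : Hb m} {a : ZMod m} (h : covers m z (a, 0)) : z.1 = a := by
  rcases h with h | h | h
  · exact (congrArg Prod.fst h).symm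
  · have hs := congrArg Prod.snd h
    simp at hs
  · have hs := congrArg Prod.snd h
    simp at hs

lemma covers_group1 {z : Hb m} {a : ZMod m} (h : covers m z (a, 1)) : z.2 = a := by
  rcases h with h | h | h
  · have hs := congrArg Prod.snd h
    simp at hs
  · exact (congrArg Prod.fst h).symm
  · have hs := congrArg Prod.snd h
    simp at hs

lemma covers_group2 {z : Hb m} {a : ZMod m} (h : covers m z (a, 2)) : z.1 + z.2 = a := by
  rcases h with h | h | h
  · have hs := congrArg Prod.snd h
    simp at hs
  · have hs := congrArg Prod.snd h
    simp at hs
  · exact (congrArg Prod.fst h).symm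

lemma exists_other {α : Type*} {s : Finset α} {a : α}
    (ha : a ∈ s) (hne : s ≠ {a}) : ∃ u ∈ s, u ≠ a := by
  by_contra hno
  push_neg at hno
  exact hne (Finset.eq_singleton_iff_unique_mem.mpr ⟨ha, hno⟩)

lemma forced (M : MinorOf (Xm m)) {ε : ℝ} (hε : 0 < ε)
    (hM : M.IsDAM (2 - ε)) (z₀ : Hb m) :
    ∃ w, w ∉ M.Y.T ∧ M.branch w = {Sum.inr z₀} := by
  by_contra hcon
  -- no branch is the singleton {z₀}
  have hF1 : ∀ w, M.branch w ≠ {Sum.inr z₀} := by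
    intro w heq
    have hwT : w ∉ M.Y.T := by
      intro hwT
      obtain ⟨t, htT, hteq⟩ := M.terminal_node w hwT
      have := M.node_mem t htT
      rw [hteq, heq] at this
      replace this := Finset.mem_singleton.mp this
      obtain ⟨τ, hτ⟩ := (mem_T_iff m).mp htT
      rw [hτ] at this
      exact Sum.inl_ne_inr this
    exact hcon ⟨w, hwT, heq⟩
  -- uniqueness facts for the three pairs of the triple of z₀
  have huniq12 : ∀ z' : Hb m, covers m z' (z₀.2, 1) → covers m z' (z₀.1 + z₀.2, 2) →
      z' = z₀ := by
    intro z' h1 h2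
    have e1 := covers_group1 h1
    have e2 := covers_group2 h2
    have : z'.1 = z₀.1 := by
      have := e2
      rw [e1] at this
      exact add_right_cancel this
    exact Prod.ext this e1
  have huniq02 : ∀ z' : Hb m, covers m z' (z₀.1, 0) → covers m z' (z₀.1 + z₀.2, 2) →
      z' = z₀ := by
    intro z' h1 h2
    have e1 := covers_group0 h1
    have e2 := covers_group2 h2
    have : z'.2 = z₀.2 := by
      rw [e1] at e2
      exact add_left_cancel e2
    exact Prod.ext e1 this
  have huniq01 : ∀ z' : Hb m, covers m z' (z₀.1, 0) → covers m z' (z₀.2, 1) →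
      z' = z₀ := by
    intro z' h1 h2
    exact Prod.ext (covers_group0 h1) (covers_group1 h2)
  -- covering facts
  have hc0 : covers m z₀ (z₀.1, 0) := Or.inl rfl
  have hc1 : covers m z₀ (z₀.2, 1) := Or.inr (Or.inl rfl)
  have hc2 : covers m z₀ (z₀.1 + z₀.2, 2) := Or.inr (Or.inr rfl)
  by_cases hassigned : ∃ w₀, Sum.inr z₀ ∈ M.branch w₀
  · obtain ⟨w₀, hw₀⟩ := hassigned
    -- find a terminal τ in the same branch, adjacent to z₀
    obtain ⟨u, hu, hune⟩ := exists_other hw₀ (hF1 w₀)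
    have hreach := (M.branch_connected w₀).preconnected ⟨Sum.inr z₀, hw₀⟩ ⟨u, hu⟩
    obtain ⟨q⟩ := hreach
    have hne' : Sum.inr z₀ ≠ u := fun h => hune h.symm
    obtain ⟨c, hcB, hadj⟩ := exists_first_step_induce hw₀ hu hne' q
    cases c with
    | inr z'' => exact (Gm_not_adj_inr_inr m) hadj
    | inl τ =>
      have hcovτ : covers m z₀ τ := (Gm_adj_inr_inl m).mp hadj
      have hw₀eq : w₀ = M.node (.inl τ) := branch_unique M (mem_T_inl m τ) hcB
      -- z₀ cannot be in the branch of any other terminal's node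
      have hF2 : ∀ s : Ter m, s ≠ τ → Sum.inr z₀ ∉ M.branch (M.node (.inl s)) := by
        intro s hsτ hmem
        have hnn : M.node (.inl s) ≠ w₀ := by
          rw [hw₀eq]
          intro heq
          exact hsτ (Sum.inl_injective (M.node_inj _ (mem_T_inl m s) _ (mem_T_inl m τ) heq))
        exact (Finset.disjoint_left.mp (M.branch_disjoint _ _ hnn) hmem) hw₀
      rcases hcovτ with h0 | h1 | h2
      · -- τ = (z₀.1, 0) : kill the pair ((z₀.2,1),(z₀.1+z₀.2,2))
        subst h0
        exact deadpair M hε hM (z₀.2, 1) (z₀.1 + z₀.2, 2) z₀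
          (ter_ne_of_snd fin3_12) hc1 hc2 huniq12 hF1
          (hF2 _ (ter_ne_of_snd (by decide)))
          (hF2 _ (ter_ne_of_snd (by decide)))
      · -- τ = (z₀.2, 1) : kill the pair ((z₀.1,0),(z₀.1+z₀.2,2))
        subst h1
        exact deadpair M hε hM (z₀.1, 0) (z₀.1 + z₀.2, 2) z₀
          (ter_ne_of_snd fin3_02) hc0 hc2 huniq02 hF1
          (hF2 _ (ter_ne_of_snd (by decide)))
          (hF2 _ (ter_ne_of_snd (by decide)))
      · -- τ = (z₀.1 + z₀.2, 2) : kill the pair ((z₀.1,0),(z₀.2,1))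
        subst h2
        exact deadpair M hε hM (z₀.1, 0) (z₀.2, 1) z₀
          (ter_ne_of_snd fin3_01) hc0 hc1 huniq01 hF1
          (hF2 _ (ter_ne_of_snd (by decide)))
          (hF2 _ (ter_ne_of_snd (by decide)))
  · push_neg at hassigned
    exact deadpair M hε hM (z₀.1, 0) (z₀.2, 1) z₀
      (ter_ne_of_snd fin3_01) hc0 hc1 huniq01 hF1
      (hassigned _) (hassigned _)

end Forced

/-- For every `ε > 0` there is a constant `c > 0` such that for infinitely
many `k` there is a graph `G` with `k` terminals on which every minor with distortion at
most `2 - ε` must have at least `c·k²` non-terminals. -/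
theorem dam_lower_bound_distortion_two (ε : ℝ) (hε : 0 < ε) :
    ∃ c : ℝ, 0 < c ∧
      ∀ n : ℕ, ∃ k : ℕ, n ≤ k ∧
        ∃ X : TermGraph, X.goodLen ∧ X.T.card = k ∧
          ∀ M : MinorOf X, M.IsDAM (2 - ε) →
            c * (k : ℝ) ^ 2 ≤ (M.nonTerms : ℝ) := by
  
  refine ⟨1/9, by norm_num, ?_⟩
  intro n
  refine ⟨3 * (n+1), by omega, Xm (n+1), Xm_goodLen (n+1), card_T (n+1), ?_⟩
  intro M hM
  have key : ∀ z : Hb (n+1), ∃ w, w ∉ M.Y.T ∧ M.branch w = {Sum.inr z} :=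
    fun z => forced M hε hM z
  choose f hf1 hf2 using key
  have hcard : Fintype.card (Hb (n+1)) ≤ (Finset.univ \ M.Y.T).card := by
    rw [← Finset.card_univ]
    apply Finset.card_le_card_of_injOn f
    · intro z _
      exact Finset.mem_sdiff.mpr ⟨Finset.mem_univ _, hf1 z⟩
    · intro a _ b _ hab
      have h1 : ({Sum.inr a} : Finset (Xm (n+1)).V) = {Sum.inr b} := by
        rw [← hf2 a, ← hf2 b, hab]
      have h2 := Finset.singleton_injective h1
      exact Sum.inr_injective h2
  have hHb : Fintype.card (Hb (n+1)) = (n+1) * (n+1) := by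
    simp [Fintype.card_prod, ZMod.card]
  rw [hHb] at hcard
  have hle : ((n+1) * (n+1) : ℕ) ≤ M.nonTerms := hcard
  have hcast : (((n+1) * (n+1) : ℕ) : ℝ) ≤ (M.nonTerms : ℝ) := by exact_mod_cast hle
  have heq : (1/9 : ℝ) * ((3 * (n+1) : ℕ) : ℝ)^2 = (((n+1) * (n+1) : ℕ) : ℝ) := by
    push_cast
    ring
  rw [heq]
  exact hcast
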